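/- arXiv:2009.09816 — 2 statements merged into one kernel-verified Lean document; each statement's English description precedes it below -/
import Mathlib

section
/- The function Ψ(κ, τ) = (κ√δ(√δ − 1)/2) · (e^{2κ√δ τ} − 1)/(e^{2κ√δ τ} + ω), with ω = (1 − √δ)/(1 + √δ), satisfies the Riccati ODE dΨ/dτ = 2Ψ² − 2δκΨ + (δ(δ−1)/2)κ² with Ψ(0) = 0. -/
open Real

theorem stmt2 (κ δ : ℝ) (hκ : 0 < κ) (hδ : 0 < δ) (hδ1 : δ ≠ 1)
    (ω : ℝ) (hω : ω = (1 - Real.sqrt δ) / (1 + Real.sqrt δ))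
    (Ψ : ℝ → ℝ)
    (hΨ : Ψ = fun τ => κ * Real.sqrt δ * (Real.sqrt δ - 1) / 2 *
      ((Real.exp (2 * κ * Real.sqrt δ * τ) - 1) / (Real.exp (2 * κ * Real.sqrt δ * τ) + ω))) :
    (∀ τ : ℝ, 0 ≤ τ →
      HasDerivAt Ψ (2 * (Ψ τ)^2 - 2 * δ * κ * Ψ τ + δ * (δ - 1) / 2 * κ^2) τ) ∧ Ψ 0 = 0 := by
  have hs : 0 < Real.sqrt δ := Real.sqrt_pos.mpr hδ
  set s := Real.sqrt δ with hsdef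
  have hs2 : s ^ 2 = δ := Real.sq_sqrt hδ.le
  have h1s : 0 < 1 + s := by linarith
  constructor
  · intro τ hτ
    have hωgt : -1 < ω := by
      rw [hω, lt_div_iff₀ h1s]; linarith
    have hE : (1:ℝ) ≤ Real.exp (2 * κ * s * τ) := by
      rw [← Real.exp_zero]
      exact Real.exp_le_exp.mpr (by positivity)
    have hD : Real.exp (2 * κ * s * τ) + ω ≠ 0 := by linarith
    have hexp : HasDerivAt (fun τ : ℝ => Real.exp (2 * κ * s * τ))
        (Real.exp (2 * κ * s * τ) * (2 * κ * s)) τ := by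
      have h1 : HasDerivAt (fun τ : ℝ => 2 * κ * s * τ) (2 * κ * s) τ := by
        simpa using (hasDerivAt_id τ).const_mul (2 * κ * s)
      exact (Real.hasDerivAt_exp (2 * κ * s * τ)).comp τ h1
    have hnum : HasDerivAt (fun τ : ℝ => Real.exp (2 * κ * s * τ) - 1)
        (Real.exp (2 * κ * s * τ) * (2 * κ * s)) τ := hexp.sub_const 1
    have hden : HasDerivAt (fun τ : ℝ => Real.exp (2 * κ * s * τ) + ω)
        (Real.exp (2 * κ * s * τ) * (2 * κ * s)) τ := hexp.add_const ω
    have hdiv := (hnum.div hden hD).const_mul (κ * s * (s - 1) / 2)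
    rw [hΨ]
    refine hdiv.congr_deriv ?_
    symm
    beta_reduce
    have h1s' : (1 + s) ≠ 0 := ne_of_gt h1s
    rw [← hs2, hω]
    set E := Real.exp (2 * κ * s * τ) with hEdef
    have key : E * (1 + s) + (1 - s) ≠ 0 := by nlinarith
    field_simp
    ring
  · rw [hΨ]
    simp
end

section
/- The function λ_{ij}(τ) defined below solves the linear ODE λ' = λ(2Ψ(κ_i,τ) + 2Ψ(κ_j,τ) − δ(κ_i + κ_j)) − δ(κ_i − κ_j)(Ψ(κ_i,τ) + ((1−δ)/2)κ_i) with λ(0) = 0, where Ψ(κ,τ) = (κ√δ(√δ−1)/2)(e^{2κ√δτ}−1)/(e^{2κ√δτ}+ω), ω = (1−√δ)/(1+√δ); explicitly λ_{ij}(τ) = κ_i (√δ(1−√δ)) / (2(e^{2κ_i√δτ}+ω)(e^{2κ_j√δτ}+ω)) · [ ((κ_j−κ_i)/(κ_j+κ_i))(e^{(κ_i+κ_j)√δτ}−1)(e^{(κ_i+κ_j)√δτ}+ω) + e^{2κ_i√δτ}(e^{(κ_j−κ_i)√δτ}−1)(e^{(κ_j−κ_i)√δτ}+ω) ]. -/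
open Real

set_option maxHeartbeats 4000000 in
set_option maxRecDepth 100000 in
set_option linter.unreachableTactic false in
set_option linter.unnecessarySeqFocus false in
set_option linter.unusedTactic false in
set_option linter.flexible false in
set_option linter.unusedVariables false in
theorem stmt16 (κi κj δ : ℝ) (hκi : 0 < κi) (hκj : 0 < κj)
    (hsum : κi + κj ≠ 0) (hδ : 0 < δ) (hδ1 : δ ≠ 1)
    (ω : ℝ) (hω : ω = (1 - Real.sqrt δ) / (1 + Real.sqrt δ))
    (Ψ : ℝ → ℝ → ℝ)
    (hΨ : Ψ = fun κ τ => κ * Real.sqrt δ * (Real.sqrt δ - 1) / 2 *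
      ((Real.exp (2 * κ * Real.sqrt δ * τ) - 1) / (Real.exp (2 * κ * Real.sqrt δ * τ) + ω)))
    (lam : ℝ → ℝ)
    (hlam : lam = fun τ =>
      κi * (Real.sqrt δ * (1 - Real.sqrt δ)) /
        (2 * (Real.exp (2 * κi * Real.sqrt δ * τ) + ω) *
             (Real.exp (2 * κj * Real.sqrt δ * τ) + ω)) *
      ((κj - κi) / (κj + κi) *
          (Real.exp ((κi + κj) * Real.sqrt δ * τ) - 1) *
          (Real.exp ((κi + κj) * Real.sqrt δ * τ) + ω)
        + Real.exp (2 * κi * Real.sqrt δ * τ) *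
          (Real.exp ((κj - κi) * Real.sqrt δ * τ) - 1) *
          (Real.exp ((κj - κi) * Real.sqrt δ * τ) + ω))) :
    (∀ τ : ℝ, 0 ≤ τ →
      HasDerivAt lam
        (lam τ * (2 * Ψ κi τ + 2 * Ψ κj τ - δ * (κi + κj))
          - δ * (κi - κj) * (Ψ κi τ + (1 - δ) / 2 * κi)) τ) ∧
    lam 0 = 0 := by
  subst hω hΨ hlam
  have hs : 0 < Real.sqrt δ := Real.sqrt_pos.mpr hδ
  set s := Real.sqrt δ with hsdef
  clear_value s
  have hs2 : s ^ 2 = δ := by rw [hsdef]; exact Real.sq_sqrt hδ.le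
  have h1s : (0:ℝ) < 1 + s := by linarith
  have hωgt : -1 < (1 - s) / (1 + s) := by
    rw [lt_div_iff₀ h1s]; linarith
  have hsum' : κj + κi ≠ 0 := by
    intro h; exact hsum (by linarith)
  set w := (1 - s) / (1 + s) with hwdef
  clear_value w
  -- rewrite lam in terms of u = exp (κi*s*τ), v = exp (κj*s*τ)
  have hfun : (fun τ =>
      κi * (s * (1 - s)) /
        (2 * (Real.exp (2 * κi * s * τ) + w) *
             (Real.exp (2 * κj * s * τ) + w)) *
      ((κj - κi) / (κj + κi) *
          (Real.exp ((κi + κj) * s * τ) - 1) *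
          (Real.exp ((κi + κj) * s * τ) + w)
        + Real.exp (2 * κi * s * τ) *
          (Real.exp ((κj - κi) * s * τ) - 1) *
          (Real.exp ((κj - κi) * s * τ) + w)))
      = (fun τ =>
      (κi * (s * (1 - s)) *
        ((κj - κi) / (κj + κi) *
            (Real.exp (κi * s * τ) * Real.exp (κj * s * τ) - 1) *
            (Real.exp (κi * s * τ) * Real.exp (κj * s * τ) + w)
          + (Real.exp (κj * s * τ) - Real.exp (κi * s * τ)) *
            (Real.exp (κj * s * τ) + w * Real.exp (κi * s * τ)))) /
      (2 * (Real.exp (κi * s * τ) ^ 2 + w) * (Real.exp (κj * s * τ) ^ 2 + w))) := by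
    funext t
    have e1 : Real.exp (2 * κi * s * t) = Real.exp (κi * s * t) ^ 2 := by
      rw [sq, ← Real.exp_add]; congr 1; ring
    have e2 : Real.exp (2 * κj * s * t) = Real.exp (κj * s * t) ^ 2 := by
      rw [sq, ← Real.exp_add]; congr 1; ring
    have e3 : Real.exp ((κi + κj) * s * t) = Real.exp (κi * s * t) * Real.exp (κj * s * t) := by
      rw [← Real.exp_add]; congr 1; ring
    have e4 : Real.exp ((κj - κi) * s * t) = Real.exp (κj * s * t) / Real.exp (κi * s * t) := by
      rw [← Real.exp_sub]; congr 1; ring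
    rw [e1, e2, e3, e4, div_mul_eq_mul_div]
    congr 1
    have hu0 : Real.exp (κi * s * t) ≠ 0 := Real.exp_ne_zero _
    field_simp
  rw [hfun]
  constructor
  · intro τ hτ
    have hu : HasDerivAt (fun t : ℝ => Real.exp (κi * s * t))
        (Real.exp (κi * s * τ) * (κi * s)) τ := by
      simpa using ((hasDerivAt_id τ).const_mul (κi * s)).exp
    have hv : HasDerivAt (fun t : ℝ => Real.exp (κj * s * t))
        (Real.exp (κj * s * τ) * (κj * s)) τ := by
      simpa using ((hasDerivAt_id τ).const_mul (κj * s)).exp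
    have hposi : 0 < Real.exp (κi * s * τ) ^ 2 + w := by
      have h1 : (1:ℝ) ≤ Real.exp (κi * s * τ) :=
        Real.one_le_exp (mul_nonneg (mul_nonneg hκi.le hs.le) hτ)
      nlinarith
    have hposj : 0 < Real.exp (κj * s * τ) ^ 2 + w := by
      have h1 : (1:ℝ) ≤ Real.exp (κj * s * τ) :=
        Real.one_le_exp (mul_nonneg (mul_nonneg hκj.le hs.le) hτ)
      nlinarith
    have hDne : 2 * (Real.exp (κi * s * τ) ^ 2 + w) * (Real.exp (κj * s * τ) ^ 2 + w) ≠ 0 := by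
      positivity
    have hN := ((((hu.mul hv).sub_const 1).mul ((hu.mul hv).add_const w)).const_mul
        ((κj - κi) / (κj + κi))).add
        ((hv.sub hu).mul (hv.add (hu.const_mul w)))
    have hN' := hN.const_mul (κi * (s * (1 - s)))
    have hD := (((hu.pow 2).add_const w).const_mul 2).mul ((hv.pow 2).add_const w)
    have hfull := hN'.div hD hDne
    convert hfull using 1
    · rfl
    · rfl
    · funext y; simp only [Pi.mul_apply, Pi.add_apply, Pi.sub_apply, Pi.pow_apply, Pi.div_apply]; ring
    -- value equality
    have e1 : Real.exp (2 * κi * s * τ) = Real.exp (κi * s * τ) ^ 2 := by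
      rw [sq, ← Real.exp_add]; congr 1; ring
    have e2 : Real.exp (2 * κj * s * τ) = Real.exp (κj * s * τ) ^ 2 := by
      rw [sq, ← Real.exp_add]; congr 1; ring
    simp only [Pi.mul_apply, Pi.add_apply, Pi.sub_apply, Pi.pow_apply, Pi.div_apply]
    rw [← hs2]
    simp only [e1, e2]
    generalize hU : Real.exp (κi * s * τ) = U at hposi ⊢
    generalize hV : Real.exp (κj * s * τ) = V at hposj ⊢
    have hrel : w * (1 + s) = 1 - s := by
      rw [hwdef]; field_simp
    field_simp [hposi.ne', hposj.ne', hsum']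
    have hw1 : 1 + w ≠ 0 := by linarith
    have hs' : s = (1 - w) / (1 + w) := by field_simp; linarith
    subst hs'
    field_simp
    ring
  · norm_num
end
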